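/- Let Â = A + Z where A = Σ_{j=1}^s θ_j u_j v_jᵀ with θ_j > 0, {u_j} ⊂ ℝ^p and {v_j} ⊂ ℝ^r orthonormal systems, and Z a p×r matrix. Let Θ = diag(θ₁,…,θ_s), U = [u₁ … u_s], V = [v₁ … v_s], and define for t > 0 not a singular value of Z the 2s×2s matrix M(t) = [[t Vᵀ(t²I_r − ZᵀZ)⁻¹V, VᵀZᵀ(t²I_p − ZZᵀ)⁻¹U], [Uᵀ(t²I_p − ZZᵀ)⁻¹Z V, t Uᵀ(t²I_p − ZZᵀ)⁻¹U]] − [[0, Θ⁻¹],[Θ⁻¹, 0]]. Then any t > 0 with det M(t) = 0 is a singular value of Â, and conversely any singular value of Â that is not a singular value of Z satisfies det M(t) = 0. -/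

import Mathlib

open Matrix

/-- `t` is a singular value of the real `p × r` matrix `M`:
`t ^ 2` is an eigenvalue of `Mᵀ * M`. -/
def IsSingVal {p r : ℕ} (M : Matrix (Fin p) (Fin r) ℝ) (t : ℝ) : Prop :=
  ∃ v : Fin r → ℝ, v ≠ 0 ∧ (Mᵀ * M) *ᵥ v = t ^ 2 • v

lemma isSingVal_iff_det {p r : ℕ} (M : Matrix (Fin p) (Fin r) ℝ) (t : ℝ) :
    IsSingVal M t ↔ (t ^ 2 • (1 : Matrix (Fin r) (Fin r) ℝ) - Mᵀ * M).det = 0 := by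
  rw [← Matrix.exists_mulVec_eq_zero_iff]
  unfold IsSingVal
  refine exists_congr fun w => and_congr_right fun hw => ?_
  rw [sub_mulVec, smul_mulVec, one_mulVec, sub_eq_zero, eq_comm]

lemma det_resolvent_ne_zero {p r : ℕ} (Z : Matrix (Fin p) (Fin r) ℝ) {t : ℝ}
    (ht : t ≠ 0) (hZ : ¬ IsSingVal Z t) :
    (t ^ 2 • (1 : Matrix (Fin p) (Fin p) ℝ) - Z * Zᵀ).det ≠ 0 := by
  intro h
  rw [← Matrix.exists_mulVec_eq_zero_iff] at h
  obtain ⟨w, hw, hw2⟩ := h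
  rw [sub_mulVec, smul_mulVec, one_mulVec, sub_eq_zero, eq_comm] at hw2
  apply hZ
  have hZw : Z *ᵥ (Zᵀ *ᵥ w) = t ^ 2 • w := by rw [mulVec_mulVec, hw2]
  refine ⟨Zᵀ *ᵥ w, ?_, ?_⟩
  · intro h0
    apply hw
    have : Z *ᵥ (Zᵀ *ᵥ w) = 0 := by rw [h0, mulVec_zero]
    rw [hZw] at this
    have ht2 : t ^ 2 ≠ 0 := pow_ne_zero _ ht
    simpa [smul_eq_zero, ht2] using this
  · rw [← mulVec_mulVec, hZw, mulVec_smul]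

theorem stmt7 {p r s : ℕ} (θ : Fin s → ℝ) (hθ : ∀ j, 0 < θ j)
    (u : Fin s → Fin p → ℝ) (v : Fin s → Fin r → ℝ)
    (hu : ∀ i j, u i ⬝ᵥ u j = if i = j then (1 : ℝ) else 0)
    (hv : ∀ i j, v i ⬝ᵥ v j = if i = j then (1 : ℝ) else 0)
    (Z : Matrix (Fin p) (Fin r) ℝ) :
    let A : Matrix (Fin p) (Fin r) ℝ := ∑ j, θ j • vecMulVec (u j) (v j)
    let Ahat := A + Z
    let Θ : Matrix (Fin s) (Fin s) ℝ := diagonal θ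
    let Um : Matrix (Fin p) (Fin s) ℝ := Matrix.of fun i j => u j i
    let Vm : Matrix (Fin r) (Fin s) ℝ := Matrix.of fun i j => v j i
    let M : ℝ → Matrix (Fin s ⊕ Fin s) (Fin s ⊕ Fin s) ℝ := fun t =>
      fromBlocks (t • (Vmᵀ * (t ^ 2 • (1 : Matrix (Fin r) (Fin r) ℝ) - Zᵀ * Z)⁻¹ * Vm))
        (Vmᵀ * Zᵀ * (t ^ 2 • (1 : Matrix (Fin p) (Fin p) ℝ) - Z * Zᵀ)⁻¹ * Um)
        (Umᵀ * (t ^ 2 • (1 : Matrix (Fin p) (Fin p) ℝ) - Z * Zᵀ)⁻¹ * Z * Vm)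
        (t • (Umᵀ * (t ^ 2 • (1 : Matrix (Fin p) (Fin p) ℝ) - Z * Zᵀ)⁻¹ * Um)) -
      fromBlocks 0 Θ⁻¹ Θ⁻¹ 0
    ∀ t : ℝ, 0 < t → ¬ IsSingVal Z t →
      ((M t).det = 0 → IsSingVal Ahat t) ∧ (IsSingVal Ahat t → (M t).det = 0) := by
  intro A Ahat Θ Um Vm M t ht hZ
  have ht0 : t ≠ 0 := ne_of_gt ht
  set Rr : Matrix (Fin r) (Fin r) ℝ := t ^ 2 • (1 : Matrix (Fin r) (Fin r) ℝ) - Zᵀ * Z with hRr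
  set Rp : Matrix (Fin p) (Fin p) ℝ := t ^ 2 • (1 : Matrix (Fin p) (Fin p) ℝ) - Z * Zᵀ with hRp
  have hHdet : Rr.det ≠ 0 := fun h => hZ ((isSingVal_iff_det Z t).mpr h)
  have hGdet : Rp.det ≠ 0 := det_resolvent_ne_zero Z ht0 hZ
  have hHu : IsUnit Rr.det := isUnit_iff_ne_zero.mpr hHdet
  have hGu : IsUnit Rp.det := isUnit_iff_ne_zero.mpr hGdet
  have hcomm : Z * Rr = Rp * Z := by
    rw [hRr, hRp, Matrix.mul_sub, Matrix.sub_mul, Matrix.mul_smul, Matrix.smul_mul,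
      Matrix.mul_one, Matrix.one_mul, Matrix.mul_assoc]
  have hcomm' : Z * Rr⁻¹ = Rp⁻¹ * Z := by
    calc Z * Rr⁻¹ = Rp⁻¹ * Rp * Z * Rr⁻¹ := by
          rw [Matrix.nonsing_inv_mul _ hGu, Matrix.one_mul]
      _ = Rp⁻¹ * (Z * Rr) * Rr⁻¹ := by rw [Matrix.mul_assoc Rp⁻¹ Rp Z, ← hcomm]
      _ = Rp⁻¹ * Z * (Rr * Rr⁻¹) := by
          rw [← Matrix.mul_assoc Rp⁻¹ Z Rr, Matrix.mul_assoc (Rp⁻¹ * Z) Rr Rr⁻¹]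
      _ = Rp⁻¹ * Z := by rw [Matrix.mul_nonsing_inv _ hHu, Matrix.mul_one]
  set K : Matrix (Fin p ⊕ Fin r) (Fin p ⊕ Fin r) ℝ :=
    fromBlocks (t • 1) Z Zᵀ (t • 1) with hK
  set Kb : Matrix (Fin p ⊕ Fin r) (Fin p ⊕ Fin r) ℝ :=
    fromBlocks (t • Rp⁻¹) (-(Rp⁻¹ * Z)) (-(Zᵀ * Rp⁻¹)) (t • Rr⁻¹) with hKb
  have key1 : ∀ X : Matrix (Fin p) (Fin p) ℝ,
      (t • (1 : Matrix (Fin p) (Fin p) ℝ)) * (t • X) + Z * -(Zᵀ * X) = Rp * X := by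
    intro X
    simp only [hRp, Matrix.sub_mul, Matrix.smul_mul, Matrix.one_mul, Matrix.mul_smul,
      smul_smul, ← sq, Matrix.mul_neg, Matrix.mul_assoc]
    abel
  have key2 : ∀ X : Matrix (Fin r) (Fin r) ℝ,
      Zᵀ * -(Z * X) + (t • (1 : Matrix (Fin r) (Fin r) ℝ)) * (t • X) = Rr * X := by
    intro X
    simp only [hRr, Matrix.sub_mul, Matrix.smul_mul, Matrix.one_mul, Matrix.mul_smul,
      smul_smul, ← sq, Matrix.mul_neg, Matrix.mul_assoc]
    abel
  have hKKb : K * Kb = 1 := by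
    rw [hK, hKb, fromBlocks_multiply]
    have e11 : (t • (1 : Matrix (Fin p) (Fin p) ℝ)) * (t • Rp⁻¹) + Z * -(Zᵀ * Rp⁻¹) = 1 :=
      (key1 Rp⁻¹).trans (Matrix.mul_nonsing_inv _ hGu)
    have e12 : (t • (1 : Matrix (Fin p) (Fin p) ℝ)) * -(Rp⁻¹ * Z) + Z * (t • Rr⁻¹) = 0 := by
      simp only [Matrix.mul_neg, Matrix.smul_mul, Matrix.one_mul, Matrix.mul_smul, hcomm']
      exact neg_add_cancel _
    have e21 : Zᵀ * (t • Rp⁻¹) + (t • (1 : Matrix (Fin r) (Fin r) ℝ)) * -(Zᵀ * Rp⁻¹) = 0 := by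
      simp only [Matrix.mul_smul, Matrix.smul_mul, Matrix.one_mul, Matrix.mul_neg]
      exact add_neg_cancel _
    have e22 : Zᵀ * -(Rp⁻¹ * Z) + (t • (1 : Matrix (Fin r) (Fin r) ℝ)) * (t • Rr⁻¹) = 1 := by
      rw [← hcomm']
      exact (key2 Rr⁻¹).trans (Matrix.mul_nonsing_inv _ hHu)
    rw [e11, e12, e21, e22, fromBlocks_one]
  have hKbK : Kb * K = 1 := mul_eq_one_comm.mp hKKb
  have hKbdet : Kb.det ≠ 0 := by
    intro h
    have h2 := congrArg Matrix.det hKKb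
    rw [det_mul, h, mul_zero, det_one] at h2
    exact zero_ne_one h2
  have hΘT : Θᵀ = Θ := diagonal_transpose θ
  have hA : A = Um * Θ * Vmᵀ := by
    show (∑ j, θ j • vecMulVec (u j) (v j))
      = (Matrix.of fun i j => u j i) * diagonal θ * (Matrix.of fun i (j : Fin s) => v j i)ᵀ
    ext i k
    rw [Matrix.mul_apply]
    simp only [Matrix.sum_apply, Matrix.smul_apply, vecMulVec_apply, smul_eq_mul,
      Matrix.mul_diagonal, Matrix.transpose_apply, Matrix.of_apply]
    exact Finset.sum_congr rfl fun j _ => by ring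
  have hAT : Aᵀ = Vm * Θ * Umᵀ := by
    rw [hA, Matrix.transpose_mul, Matrix.transpose_mul, Matrix.transpose_transpose, hΘT,
      Matrix.mul_assoc, ← Matrix.mul_assoc]
  have hΘu : IsUnit Θ.det := by
    show IsUnit (diagonal θ).det
    rw [det_diagonal]
    exact isUnit_iff_ne_zero.mpr (Finset.prod_ne_zero_iff.mpr fun j _ => (hθ j).ne')
  set Dm : Matrix (Fin s ⊕ Fin s) (Fin s ⊕ Fin s) ℝ := fromBlocks 0 Θ Θ 0 with hDm
  set E : Matrix (Fin s ⊕ Fin s) (Fin s ⊕ Fin s) ℝ := fromBlocks 0 Θ⁻¹ Θ⁻¹ 0 with hE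
  have hEDm : E * Dm = 1 := by
    rw [hE, hDm, fromBlocks_multiply, ← fromBlocks_one]
    simp [Matrix.nonsing_inv_mul _ hΘu]
  have hEdet : E.det ≠ 0 := by
    intro h
    have h2 := congrArg Matrix.det hEDm
    rw [det_mul, h, zero_mul, det_one] at h2
    exact zero_ne_one h2
  set W : Matrix (Fin p ⊕ Fin r) (Fin s ⊕ Fin s) ℝ := fromBlocks 0 Um Vm 0 with hW
  have hWKbW : Wᵀ * Kb * W = fromBlocks (t • (Vmᵀ * Rr⁻¹ * Vm)) (-(Vmᵀ * Zᵀ * Rp⁻¹ * Um))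
      (-(Umᵀ * Rp⁻¹ * Z * Vm)) (t • (Umᵀ * Rp⁻¹ * Um)) := by
    rw [hW, hKb, fromBlocks_transpose, fromBlocks_multiply, fromBlocks_multiply]
    congr <;> simp [Matrix.mul_assoc, Matrix.smul_mul, Matrix.mul_smul]
  set Bm : Matrix (Fin s ⊕ Fin s) (Fin s ⊕ Fin s) ℝ :=
    fromBlocks (t • (Vmᵀ * Rr⁻¹ * Vm)) (Vmᵀ * Zᵀ * Rp⁻¹ * Um)
      (Umᵀ * Rp⁻¹ * Z * Vm) (t • (Umᵀ * Rp⁻¹ * Um)) with hBm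
  have hMtB : M t = Bm - E := rfl
  set J : Matrix (Fin s ⊕ Fin s) (Fin s ⊕ Fin s) ℝ := fromBlocks 1 0 0 (-1) with hJ
  have hJBJ : J * Bm * J = fromBlocks (t • (Vmᵀ * Rr⁻¹ * Vm)) (-(Vmᵀ * Zᵀ * Rp⁻¹ * Um))
      (-(Umᵀ * Rp⁻¹ * Z * Vm)) (t • (Umᵀ * Rp⁻¹ * Um)) := by
    rw [hJ, hBm, fromBlocks_multiply, fromBlocks_multiply]
    congr <;> simp
  have hJEJ : J * E * J = -E := by
    rw [hJ, hE, fromBlocks_multiply, fromBlocks_multiply, fromBlocks_neg]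
    congr <;> simp
  have hJMJ : J * M t * J = Wᵀ * Kb * W + E := by
    rw [hMtB, Matrix.mul_sub, Matrix.sub_mul, hJBJ, hJEJ, hWKbW, sub_neg_eq_add]
  have hdetJ : J.det * J.det = 1 := by
    have hJd : J.det = (-1 : ℝ) ^ s := by
      rw [hJ, det_fromBlocks_zero₂₁, det_one, one_mul, det_neg, det_one, mul_one,
        Fintype.card_fin]
    rw [hJd, ← pow_add]
    exact Even.neg_one_pow ⟨s, by ring⟩
  have hdetM : (M t).det = (Wᵀ * Kb * W + E).det := by
    rw [← hJMJ, det_mul, det_mul]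
    linear_combination (-(M t).det) * hdetJ
  have hfactor : Wᵀ * Kb * W + E = E * (1 + Dm * (Wᵀ * Kb * W)) := by
    rw [Matrix.mul_add, Matrix.mul_one, ← Matrix.mul_assoc, hEDm, Matrix.one_mul, add_comm]
  have hWDW : W * Dm * Wᵀ = fromBlocks 0 A Aᵀ 0 := by
    rw [hW, hDm, fromBlocks_transpose, fromBlocks_multiply, fromBlocks_multiply, hAT, hA]
    congr <;> simp [Matrix.mul_assoc]
  have hAhat : Ahat = A + Z := rfl
  have hAhatT : Ahatᵀ = Aᵀ + Zᵀ := by rw [hAhat, Matrix.transpose_add]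
  have hKhat : K + W * Dm * Wᵀ = fromBlocks (t • 1) Ahat Ahatᵀ (t • 1) := by
    rw [hWDW, hK, fromBlocks_add, hAhat, hAhatT]
    rw [add_zero, add_zero, add_comm Z A, add_comm Zᵀ Aᵀ]
  have hchain : (1 + Dm * (Wᵀ * Kb * W)).det
      = Kb.det * (fromBlocks (t • 1) Ahat Ahatᵀ (t • (1 : Matrix (Fin r) (Fin r) ℝ))).det := by
    have h1 : Dm * (Wᵀ * Kb * W) = (Dm * Wᵀ) * (Kb * W) := by
      rw [Matrix.mul_assoc Dm Wᵀ (Kb * W), ← Matrix.mul_assoc Wᵀ Kb W]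
    have h2 : (1 : Matrix (Fin p ⊕ Fin r) (Fin p ⊕ Fin r) ℝ) + Kb * W * (Dm * Wᵀ)
        = Kb * (K + W * Dm * Wᵀ) := by
      rw [Matrix.mul_add, hKbK]
      congr 1
      rw [Matrix.mul_assoc, Matrix.mul_assoc]
    rw [h1, det_one_add_mul_comm, h2, det_mul, hKhat]
  have hSchur : (fromBlocks (t • 1) Ahat Ahatᵀ (t • (1 : Matrix (Fin r) (Fin r) ℝ))).det
      = t ^ p * (t⁻¹ ^ r * (t ^ 2 • (1 : Matrix (Fin r) (Fin r) ℝ) - Ahatᵀ * Ahat).det) := by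
    have hinv : (t • (1 : Matrix (Fin p) (Fin p) ℝ)) * (t⁻¹ • (1 : Matrix (Fin p) (Fin p) ℝ))
        = 1 := by
      rw [Matrix.smul_mul, Matrix.mul_smul, Matrix.one_mul, smul_smul,
        mul_inv_cancel₀ ht0, one_smul]
    have hinv' : (t⁻¹ • (1 : Matrix (Fin p) (Fin p) ℝ)) * (t • (1 : Matrix (Fin p) (Fin p) ℝ))
        = 1 := by
      rw [Matrix.smul_mul, Matrix.mul_smul, Matrix.one_mul, smul_smul,
        inv_mul_cancel₀ ht0, one_smul]
    haveI : Invertible (t • (1 : Matrix (Fin p) (Fin p) ℝ)) := ⟨t⁻¹ • 1, hinv', hinv⟩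
    rw [det_fromBlocks₁₁]
    have hiof : ⅟(t • (1 : Matrix (Fin p) (Fin p) ℝ)) = t⁻¹ • (1 : Matrix (Fin p) (Fin p) ℝ) :=
      invOf_eq_right_inv hinv
    rw [hiof]
    have hd1 : (t • (1 : Matrix (Fin p) (Fin p) ℝ)).det = t ^ p := by
      rw [det_smul, det_one, mul_one, Fintype.card_fin]
    have hts : t⁻¹ * t ^ 2 = t := by field_simp
    have hd2 : t • (1 : Matrix (Fin r) (Fin r) ℝ)
          - Ahatᵀ * (t⁻¹ • (1 : Matrix (Fin p) (Fin p) ℝ)) * Ahat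
        = t⁻¹ • (t ^ 2 • (1 : Matrix (Fin r) (Fin r) ℝ) - Ahatᵀ * Ahat) := by
      rw [smul_sub, smul_smul, hts, Matrix.mul_smul, Matrix.smul_mul, Matrix.mul_one]
    rw [hd1, hd2, det_smul, Fintype.card_fin]
  have hfinal : (M t).det = (E.det * Kb.det * t ^ p * t⁻¹ ^ r)
      * (t ^ 2 • (1 : Matrix (Fin r) (Fin r) ℝ) - Ahatᵀ * Ahat).det := by
    rw [hdetM, hfactor, det_mul, hchain, hSchur]; ring
  have hc : E.det * Kb.det * t ^ p * t⁻¹ ^ r ≠ 0 := by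
    refine mul_ne_zero (mul_ne_zero (mul_ne_zero hEdet hKbdet) (pow_ne_zero _ ht0))
      (pow_ne_zero _ (inv_ne_zero ht0))
  constructor
  · intro h
    rw [isSingVal_iff_det]
    rw [hfinal] at h
    exact (mul_eq_zero.mp h).resolve_left hc
  · intro h
    rw [isSingVal_iff_det] at h
    rw [hfinal, h, mul_zero]
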